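/- Let K ≥ 1 be an integer and let P_{D,k}, P_{F,k} ∈ (0,1) satisfy P_{D,k} > P_{F,k} for every k ∈ {1,…,K}. Define the Poisson-Binomial pmfs P₁(ℓ) = Σ_{S ⊆ {1,…,K}, |S| = ℓ} Π_{k∈S} P_{D,k} · Π_{k∉S} (1 − P_{D,k}) and P₀(ℓ) = Σ_{S ⊆ {1,…,K}, |S| = ℓ} Π_{k∈S} P_{F,k} · Π_{k∉S} (1 − P_{F,k}) for ℓ ∈ {0,…,K}. Then P₁(ℓ)·P₀(ℓ−1) > P₁(ℓ−1)·P₀(ℓ) for every ℓ ∈ {1,…,K}, i.e., the log-likelihood ratio λ(ℓ) = ln[P₁(ℓ)/P₀(ℓ)] is strictly increasing in ℓ. -/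

import Mathlib

open Finset

private def pbn (p : ℕ → ℝ) (n ℓ : ℕ) : ℝ :=
  ∑ S ∈ (Finset.range n).powersetCard ℓ,
    (∏ k ∈ S, p k) * ∏ k ∈ Finset.range n \ S, (1 - p k)

private def pb (p : ℕ → ℝ) (n : ℕ) (ℓ : ℤ) : ℝ :=
  if ℓ < 0 then 0 else pbn p n ℓ.toNat

private lemma pb_neg {p : ℕ → ℝ} {n : ℕ} {ℓ : ℤ} (h : ℓ < 0) : pb p n ℓ = 0 := by
  simp [pb, h]

private lemma pb_of_nonneg {p : ℕ → ℝ} {n : ℕ} {ℓ : ℤ} (h : 0 ≤ ℓ) :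
    pb p n ℓ = pbn p n ℓ.toNat := by
  simp [pb, not_lt.2 h]

private lemma pbn_gt {p : ℕ → ℝ} {n ℓ : ℕ} (h : n < ℓ) : pbn p n ℓ = 0 := by
  rw [pbn, powersetCard_eq_empty.2 (by simpa using h)]
  simp

private lemma pb_gt {p : ℕ → ℝ} {n : ℕ} {ℓ : ℤ} (h : (n : ℤ) < ℓ) : pb p n ℓ = 0 := by
  rw [pb_of_nonneg (le_trans (Int.ofNat_nonneg n) h.le), pbn_gt]
  omega

private lemma pbn_pos {p : ℕ → ℝ} {n ℓ : ℕ} (h0 : ∀ k < n, 0 < p k)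
    (h1 : ∀ k < n, p k < 1) (h : ℓ ≤ n) : 0 < pbn p n ℓ := by
  apply Finset.sum_pos
  · intro S hS
    rw [mem_powersetCard] at hS
    apply mul_pos
    · exact Finset.prod_pos fun k hk => h0 k (by simpa using hS.1 hk)
    · exact Finset.prod_pos fun k hk => by
        have := (mem_sdiff.1 hk).1
        have := h1 k (by simpa using (mem_sdiff.1 hk).1)
        linarith
  · exact powersetCard_nonempty.2 (by simpa using h)

private lemma pbn_nonneg {p : ℕ → ℝ} {n ℓ : ℕ} (h0 : ∀ k < n, 0 < p k)
    (h1 : ∀ k < n, p k < 1) : 0 ≤ pbn p n ℓ := by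
  rcases le_or_gt ℓ n with h | h
  · exact (pbn_pos h0 h1 h).le
  · rw [pbn_gt h]

private lemma pb_nonneg {p : ℕ → ℝ} {n : ℕ} {ℓ : ℤ} (h0 : ∀ k < n, 0 < p k)
    (h1 : ∀ k < n, p k < 1) : 0 ≤ pb p n ℓ := by
  rcases lt_or_ge ℓ 0 with h | h
  · rw [pb_neg h]
  · rw [pb_of_nonneg h]; exact pbn_nonneg h0 h1

private lemma pb_pos {p : ℕ → ℝ} {n : ℕ} {ℓ : ℤ} (h0 : ∀ k < n, 0 < p k)
    (h1 : ∀ k < n, p k < 1) (hl : 0 ≤ ℓ) (hn : ℓ ≤ (n : ℤ)) : 0 < pb p n ℓ := by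
  rw [pb_of_nonneg hl]
  exact pbn_pos h0 h1 (by omega)

private lemma pb_eq_zero_iff {p : ℕ → ℝ} {n : ℕ} {ℓ : ℤ} (h0 : ∀ k < n, 0 < p k)
    (h1 : ∀ k < n, p k < 1) : pb p n ℓ = 0 ↔ (ℓ < 0 ∨ (n : ℤ) < ℓ) := by
  constructor
  · intro h
    by_contra hc
    push_neg at hc
    exact absurd h (pb_pos h0 h1 hc.1 hc.2).ne'
  · rintro (h | h)
    · exact pb_neg h
    · exact pb_gt h

private lemma pbn_zero (p : ℕ → ℝ) (n : ℕ) :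
    pbn p n 0 = ∏ k ∈ Finset.range n, (1 - p k) := by
  simp [pbn, powersetCard_zero]

private lemma pbn_succ_zero (p : ℕ → ℝ) (n : ℕ) :
    pbn p (n + 1) 0 = (1 - p n) * pbn p n 0 := by
  rw [pbn_zero, pbn_zero, Finset.prod_range_succ]
  ring

private lemma pbn_succ (p : ℕ → ℝ) (n ℓ : ℕ) :
    pbn p (n + 1) (ℓ + 1) = p n * pbn p n ℓ + (1 - p n) * pbn p n (ℓ + 1) := by
  have hn : n ∉ Finset.range n := by simp
  rw [pbn, Finset.range_add_one, powersetCard_succ_insert hn]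
  rw [Finset.sum_union]
  · rw [add_comm (p n * pbn p n ℓ)]
    congr 1
    · -- subsets not containing n
      simp only [pbn]
      rw [Finset.mul_sum]
      apply Finset.sum_congr rfl
      intro S hS
      rw [mem_powersetCard] at hS
      have hnS : n ∉ S := fun h => hn (hS.1 h)
      have : insert n (Finset.range n) \ S = insert n (Finset.range n \ S) := by
        ext x
        simp only [mem_sdiff, mem_insert]
        constructor
        · rintro ⟨h1 | h1, h2⟩
          · exact Or.inl h1
          · exact Or.inr ⟨h1, h2⟩
        · rintro (rfl | ⟨h1, h2⟩)
          · exact ⟨Or.inl rfl, hnS⟩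
          · exact ⟨Or.inr h1, h2⟩
      rw [this, Finset.prod_insert (by simp)]
      ring
    · -- subsets containing n: image of insert n
      rw [Finset.sum_image]
      simp only [pbn]
      rw [Finset.mul_sum]
      · apply Finset.sum_congr rfl
        intro S hS
        rw [mem_powersetCard] at hS
        have hnS : n ∉ S := fun h => hn (hS.1 h)
        have h1 : insert n (Finset.range n) \ insert n S = Finset.range n \ S := by
          ext x
          simp only [mem_sdiff, mem_insert, not_or]
          constructor
          · rintro ⟨h1 | h1, h2, h3⟩
            · exact absurd h1 h2
            · exact ⟨h1, h3⟩
          · rintro ⟨h1, h2⟩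
            exact ⟨Or.inr h1, fun h => hn (h ▸ h1), h2⟩
        rw [h1, Finset.prod_insert hnS]
        ring
      · intro S hS T hT h
        rw [Finset.mem_coe, mem_powersetCard] at hS hT
        have hnS : n ∉ S := fun h => hn (hS.1 h)
        have hnT : n ∉ T := fun h => hn (hT.1 h)
        have := congrArg (Finset.erase · n) h
        simpa [Finset.erase_insert hnS, Finset.erase_insert hnT] using this
  · -- disjoint
    rw [Finset.disjoint_left]
    intro S hS hS'
    rw [mem_powersetCard] at hS
    rcases Finset.mem_image.1 hS' with ⟨T, _, rfl⟩
    exact hn (hS.1 (Finset.mem_insert_self n T))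


private lemma pb_succ (p : ℕ → ℝ) (n : ℕ) (ℓ : ℤ) :
    pb p (n + 1) ℓ = p n * pb p n (ℓ - 1) + (1 - p n) * pb p n ℓ := by
  rcases lt_trichotomy ℓ 0 with h | h | h
  · rw [pb_neg h, pb_neg (by omega), pb_neg h]; ring
  · subst h
    have h0 : pb p n (0 - 1) = 0 := pb_neg (by norm_num)
    rw [h0, pb_of_nonneg le_rfl, pb_of_nonneg le_rfl]
    simpa using pbn_succ_zero p n
  · rw [pb_of_nonneg h.le, pb_of_nonneg (by omega), pb_of_nonneg (by omega)]
    have h1 : ℓ.toNat = (ℓ - 1).toNat + 1 := by omega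
    rw [h1, pbn_succ]

private lemma pb_lag2 {p : ℕ → ℝ} {n : ℕ} (h0 : ∀ k < n, 0 < p k) (h1 : ∀ k < n, p k < 1)
    (hlc : ∀ ℓ : ℤ, pb p n (ℓ - 1) * pb p n (ℓ + 1) ≤ pb p n ℓ * pb p n ℓ) (ℓ : ℤ) :
    pb p n (ℓ - 2) * pb p n (ℓ + 1) ≤ pb p n (ℓ - 1) * pb p n ℓ := by
  rcases lt_or_ge (ℓ - 2) 0 with h | h
  · rw [pb_neg h, zero_mul]
    exact mul_nonneg (pb_nonneg h0 h1) (pb_nonneg h0 h1)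
  rcases lt_or_ge (n : ℤ) (ℓ + 1) with h2 | h2
  · rw [pb_gt h2, mul_zero]
    exact mul_nonneg (pb_nonneg h0 h1) (pb_nonneg h0 h1)
  have hb1 : 0 < pb p n (ℓ - 1) := pb_pos h0 h1 (by omega) (by omega)
  have hb0 : 0 < pb p n ℓ := pb_pos h0 h1 (by omega) (by omega)
  have i1 := hlc (ℓ - 1)
  rw [(by ring : ℓ - 1 - 1 = ℓ - 2), (by ring : ℓ - 1 + 1 = ℓ)] at i1
  have i2 := hlc ℓ
  have key : pb p n (ℓ - 2) * pb p n (ℓ + 1) * (pb p n (ℓ - 1) * pb p n ℓ) ≤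
      pb p n (ℓ - 1) * pb p n ℓ * (pb p n (ℓ - 1) * pb p n ℓ) := by
    have hnn2 : 0 ≤ pb p n (ℓ - 2) := pb_nonneg h0 h1
    have hnn1 : 0 ≤ pb p n (ℓ + 1) := pb_nonneg h0 h1
    nlinarith [mul_le_mul_of_nonneg_left i2 (mul_nonneg hnn2 hb0.le),
      mul_le_mul_of_nonneg_right i1 (mul_nonneg hb0.le hb0.le)]
  exact le_of_mul_le_mul_right key (mul_pos hb1 hb0)

private lemma pb_logconcave : ∀ (n : ℕ) (p : ℕ → ℝ), (∀ k < n, 0 < p k) →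
    (∀ k < n, p k < 1) → ∀ ℓ : ℤ, pb p n (ℓ - 1) * pb p n (ℓ + 1) ≤ pb p n ℓ * pb p n ℓ := by
  intro n
  induction n with
  | zero =>
    intro p h0 h1 ℓ
    rcases lt_or_ge (ℓ - 1) 0 with h | h
    · rw [pb_neg h, zero_mul]
      exact mul_nonneg (pb_nonneg h0 h1) (pb_nonneg h0 h1)
    · rw [pb_gt (show ((0:ℕ):ℤ) < ℓ + 1 by omega), mul_zero]
      exact mul_nonneg (pb_nonneg h0 h1) (pb_nonneg h0 h1)
  | succ n ih =>
    intro p h0 h1 ℓ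
    have h0' : ∀ k < n, 0 < p k := fun k hk => h0 k (by omega)
    have h1' : ∀ k < n, p k < 1 := fun k hk => h1 k (by omega)
    have hP0 : 0 < p n := h0 n (lt_add_one n)
    have hP1 : p n < 1 := h1 n (lt_add_one n)
    have hlc := ih p h0' h1'
    have i1 := hlc (ℓ - 1)
    rw [(by ring : ℓ - 1 - 1 = ℓ - 2), (by ring : ℓ - 1 + 1 = ℓ)] at i1
    have i2 := hlc ℓ
    have i3 := pb_lag2 h0' h1' hlc ℓ
    rw [pb_succ p n (ℓ - 1), pb_succ p n (ℓ + 1), pb_succ p n ℓ,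
      (by ring : ℓ - 1 - 1 = ℓ - 2), (by ring : ℓ + 1 - 1 = ℓ)]
    nlinarith [mul_nonneg (mul_nonneg hP0.le hP0.le) (sub_nonneg.2 i1),
      mul_nonneg (mul_nonneg (sub_pos.2 hP1).le (sub_pos.2 hP1).le) (sub_nonneg.2 i2),
      mul_nonneg (mul_nonneg hP0.le (sub_pos.2 hP1).le) (sub_nonneg.2 i3)]

private lemma pb_X {p q : ℕ → ℝ} {n : ℕ}
    (hq0 : ∀ k < n, 0 < q k) (hq1 : ∀ k < n, q k < 1)
    (hp0 : ∀ k < n, 0 < p k) (hp1 : ∀ k < n, p k < 1)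
    (hweak : ∀ ℓ : ℤ, pb p n (ℓ - 1) * pb q n ℓ ≤ pb p n ℓ * pb q n (ℓ - 1)) (j : ℤ) :
    pb p n (j - 1) * pb q n (j + 1) ≤ pb p n j * pb q n j := by
  rcases lt_or_ge (j - 1) 0 with h | h
  · rw [pb_neg h, zero_mul]
    exact mul_nonneg (pb_nonneg hp0 hp1) (pb_nonneg hq0 hq1)
  rcases lt_or_ge (n : ℤ) (j + 1) with h2 | h2
  · rw [pb_gt h2, mul_zero]
    exact mul_nonneg (pb_nonneg hp0 hp1) (pb_nonneg hq0 hq1)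
  have hb1 : 0 < pb q n (j - 1) := pb_pos hq0 hq1 (by omega) (by omega)
  have hb0 : 0 < pb q n j := pb_pos hq0 hq1 (by omega) (by omega)
  have h3 := hweak j
  have h4 := pb_logconcave n q hq0 hq1 j
  have key : pb p n (j - 1) * pb q n (j + 1) * (pb q n (j - 1) * pb q n j) ≤
      pb p n j * pb q n j * (pb q n (j - 1) * pb q n j) := by
    have ha1 : 0 ≤ pb p n (j - 1) := pb_nonneg hp0 hp1
    nlinarith [mul_le_mul_of_nonneg_left h4 (mul_nonneg ha1 hb0.le),
      mul_le_mul_of_nonneg_right h3 (mul_nonneg hb0.le hb0.le)]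
  exact le_of_mul_le_mul_right key (mul_pos hb1 hb0)

private lemma pb_C2 {p q : ℕ → ℝ} {n : ℕ}
    (hq0 : ∀ k < n, 0 < q k) (hq1 : ∀ k < n, q k < 1)
    (hp0 : ∀ k < n, 0 < p k) (hp1 : ∀ k < n, p k < 1)
    (hweak : ∀ ℓ : ℤ, pb p n (ℓ - 1) * pb q n ℓ ≤ pb p n ℓ * pb q n (ℓ - 1)) (j : ℤ) :
    pb p n (j - 1) * pb q n (j + 1) ≤ pb p n (j + 1) * pb q n (j - 1) := by
  rcases lt_or_ge (j - 1) 0 with h | h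
  · rw [pb_neg h, zero_mul]
    exact mul_nonneg (pb_nonneg hp0 hp1) (pb_nonneg hq0 hq1)
  rcases lt_or_ge (n : ℤ) (j + 1) with h2 | h2
  · rw [pb_gt (p := q) h2, mul_zero]
    exact mul_nonneg (pb_nonneg hp0 hp1) (pb_nonneg hq0 hq1)
  have ha0 : 0 < pb p n j := pb_pos hp0 hp1 (by omega) (by omega)
  have hb0 : 0 < pb q n j := pb_pos hq0 hq1 (by omega) (by omega)
  have h3 := hweak j
  have h5 := hweak (j + 1)
  rw [add_sub_cancel_right] at h5
  have key : pb p n (j - 1) * pb q n (j + 1) * (pb p n j * pb q n j) ≤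
      pb p n (j + 1) * pb q n (j - 1) * (pb p n j * pb q n j) := by
    have hb1 : 0 ≤ pb q n (j + 1) := pb_nonneg hq0 hq1
    have ha1 : 0 ≤ pb p n (j - 1) := pb_nonneg hp0 hp1
    nlinarith [mul_le_mul h3 h5 (mul_nonneg ha0.le hb1) (mul_nonneg ha0.le (pb_nonneg hq0 hq1))]
  exact le_of_mul_le_mul_right key (mul_pos ha0 hb0)

private lemma pb_tp2 : ∀ (n : ℕ) (p q : ℕ → ℝ),
    (∀ k < n, 0 < q k ∧ q k < p k ∧ p k < 1) → ∀ ℓ : ℤ,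
    pb p n (ℓ - 1) * pb q n ℓ ≤ pb p n ℓ * pb q n (ℓ - 1) ∧
    (1 ≤ ℓ → ℓ ≤ (n : ℤ) → pb p n (ℓ - 1) * pb q n ℓ < pb p n ℓ * pb q n (ℓ - 1)) := by
  intro n
  induction n with
  | zero =>
    intro p q _ ℓ
    refine ⟨?_, fun h1 h2 => absurd (h1.trans h2) (by norm_num)⟩
    rcases lt_or_ge ℓ 1 with h | h
    · rw [pb_neg (p := p) (show ℓ - 1 < 0 by omega), pb_neg (p := q) (show ℓ - 1 < 0 by omega)]
      simp
    · rw [pb_gt (p := p) (show ((0:ℕ):ℤ) < ℓ by omega),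
        pb_gt (p := q) (show ((0:ℕ):ℤ) < ℓ by omega)]
      simp
  | succ n ih =>
    intro p q h ℓ
    have h' : ∀ k < n, 0 < q k ∧ q k < p k ∧ p k < 1 := fun k hk => h k (by omega)
    have hq0 : ∀ k < n, 0 < q k := fun k hk => (h' k hk).1
    have hq1 : ∀ k < n, q k < 1 := fun k hk => ((h' k hk).2.1.trans (h' k hk).2.2)
    have hp0 : ∀ k < n, 0 < p k := fun k hk => ((h' k hk).1.trans (h' k hk).2.1)
    have hp1 : ∀ k < n, p k < 1 := fun k hk => (h' k hk).2.2
    obtain ⟨hQ0, hQP, hP1⟩ := h n (lt_add_one n)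
    have hP0 : 0 < p n := hQ0.trans hQP
    have hQ1 : q n < 1 := hQP.trans hP1
    have ihw : ∀ j : ℤ, pb p n (j - 1) * pb q n j ≤ pb p n j * pb q n (j - 1) :=
      fun j => (ih p q h' j).1
    -- the four ingredients
    have t1 := ihw (ℓ - 1)
    rw [(by ring : ℓ - 1 - 1 = ℓ - 2)] at t1
    have t2 := ihw ℓ
    have t3 := pb_C2 hq0 hq1 hp0 hp1 ihw (ℓ - 1)
    rw [(by ring : ℓ - 1 - 1 = ℓ - 2), (by ring : ℓ - 1 + 1 = ℓ)] at t3
    have t4 := pb_X hq0 hq1 hp0 hp1 ihw (ℓ - 1)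
    rw [(by ring : ℓ - 1 - 1 = ℓ - 2), (by ring : ℓ - 1 + 1 = ℓ)] at t4
    have erw : pb p (n+1) (ℓ-1) = p n * pb p n (ℓ-2) + (1 - p n) * pb p n (ℓ-1) := by
      rw [pb_succ, (by ring : ℓ - 1 - 1 = ℓ - 2)]
    have erw2 : pb q (n+1) (ℓ-1) = q n * pb q n (ℓ-2) + (1 - q n) * pb q n (ℓ-1) := by
      rw [pb_succ, (by ring : ℓ - 1 - 1 = ℓ - 2)]
    constructor
    · rw [pb_succ p n ℓ, pb_succ q n ℓ, erw, erw2]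
      nlinarith [mul_nonneg (mul_nonneg hP0.le hQ0.le) (sub_nonneg.2 t1),
        mul_nonneg (mul_nonneg (sub_pos.2 hP1).le (sub_pos.2 hQ1).le) (sub_nonneg.2 t2),
        mul_nonneg (mul_nonneg (sub_pos.2 hP1).le hQ0.le) (sub_nonneg.2 t3),
        mul_nonneg (sub_pos.2 hQP).le (sub_nonneg.2 t4)]
    · intro hl1 hl2
      rw [pb_succ p n ℓ, pb_succ q n ℓ, erw, erw2]
      rcases lt_or_ge (n : ℤ) ℓ with hcase | hcase
      · -- ℓ = n + 1 : use the X term strictly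
        have hbl : pb q n ℓ = 0 := pb_gt hcase
        have t4' : 0 < pb p n (ℓ-1) * pb q n (ℓ-1) - pb p n (ℓ-2) * pb q n ℓ := by
          rw [hbl, mul_zero, sub_zero]
          exact mul_pos (pb_pos hp0 hp1 (by omega) (by omega))
            (pb_pos hq0 hq1 (by omega) (by omega))
        nlinarith [mul_nonneg (mul_nonneg hP0.le hQ0.le) (sub_nonneg.2 t1),
          mul_nonneg (mul_nonneg (sub_pos.2 hP1).le (sub_pos.2 hQ1).le) (sub_nonneg.2 t2),
          mul_nonneg (mul_nonneg (sub_pos.2 hP1).le hQ0.le) (sub_nonneg.2 t3),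
          mul_pos (sub_pos.2 hQP) t4']
      · -- ℓ ≤ n : strict consecutive term
        have t2' := (ih p q h' ℓ).2 hl1 hcase
        nlinarith [mul_nonneg (mul_nonneg hP0.le hQ0.le) (sub_nonneg.2 t1),
          mul_pos (mul_pos (sub_pos.2 hP1) (sub_pos.2 hQ1)) (sub_pos.2 t2'),
          mul_nonneg (mul_nonneg (sub_pos.2 hP1).le hQ0.le) (sub_nonneg.2 t3),
          mul_nonneg (sub_pos.2 hQP).le (sub_nonneg.2 t4)]

/-- Theorem 2: for conditionally mutually independent but non-identically
distributed sensors with `P_{D,k} > P_{F,k}` for all `k`, the Poisson-Binomial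
pmfs of the number of active sensors have a strictly increasing likelihood
ratio. -/
theorem stmt_4 (K : ℕ) (hK : 1 ≤ K) (PD PF : ℕ → ℝ)
    (hPF : ∀ k < K, 0 < PF k) (hPD : ∀ k < K, PD k < 1)
    (hDF : ∀ k < K, PF k < PD k)
    (P1 P0 : ℕ → ℝ)
    (hP1 : ∀ ℓ, P1 ℓ = ∑ S ∈ (Finset.range K).powersetCard ℓ,
        (∏ k ∈ S, PD k) * ∏ k ∈ Finset.range K \ S, (1 - PD k))
    (hP0 : ∀ ℓ, P0 ℓ = ∑ S ∈ (Finset.range K).powersetCard ℓ,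
        (∏ k ∈ S, PF k) * ∏ k ∈ Finset.range K \ S, (1 - PF k)) :
    ∀ ℓ, 1 ≤ ℓ → ℓ ≤ K → P1 ℓ * P0 (ℓ - 1) > P1 (ℓ - 1) * P0 ℓ := by
  intro ℓ h1 h2
  have key := (pb_tp2 K PD PF (fun k hk => ⟨hPF k hk, hDF k hk, hPD k hk⟩) (ℓ : ℤ)).2
    (by exact_mod_cast h1) (by exact_mod_cast h2)
  have e1 : pb PD K (ℓ : ℤ) = P1 ℓ := by
    rw [pb_of_nonneg (Int.natCast_nonneg ℓ), Int.toNat_natCast, hP1]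
    rfl
  have e2 : pb PD K ((ℓ : ℤ) - 1) = P1 (ℓ - 1) := by
    rw [show ((ℓ : ℤ) - 1) = ((ℓ - 1 : ℕ) : ℤ) by omega,
      pb_of_nonneg (Int.natCast_nonneg _), Int.toNat_natCast, hP1]
    rfl
  have e3 : pb PF K (ℓ : ℤ) = P0 ℓ := by
    rw [pb_of_nonneg (Int.natCast_nonneg ℓ), Int.toNat_natCast, hP0]
    rfl
  have e4 : pb PF K ((ℓ : ℤ) - 1) = P0 (ℓ - 1) := by
    rw [show ((ℓ : ℤ) - 1) = ((ℓ - 1 : ℕ) : ℤ) by omega,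
      pb_of_nonneg (Int.natCast_nonneg _), Int.toNat_natCast, hP0]
    rfl
  rw [e1, e2, e3, e4] at key
  linarith
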